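/- Let M be a nondeterministic finite automaton over an alphabet α with a finite state type σ, where α is also a finite type. If the language L(M) accepted by M is a finite set and L(M) contains a word w of length n, then M has at least n transitions, i.e., the set {(q, a, q') : q' ∈ M.step q a} has cardinality at least n. -/

import Mathlib

section Aux

variable {α : Type*} {σ : Type*}

/-- A chain of transitions from `p` to `q`. -/
def NChain (M : NFA α σ) : σ → List (σ × α × σ) → σ → Prop
  | p, [], q => p = q
  | p, t :: l, q => t.1 = p ∧ t.2.2 ∈ M.step p t.2.1 ∧ NChain M t.2.2 l q

lemma nchain_append {M : NFA α σ} {p q : σ} {l₁ l₂ : List (σ × α × σ)} :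
    NChain M p (l₁ ++ l₂) q ↔ ∃ r, NChain M p l₁ r ∧ NChain M r l₂ q := by
  induction l₁ generalizing p with
  | nil => simp [NChain]
  | cons t l ih =>
    constructor
    · rintro ⟨h1, h2, h3⟩
      obtain ⟨r, h4, h5⟩ := ih.1 h3
      exact ⟨r, ⟨h1, h2, h4⟩, h5⟩
    · rintro ⟨r, ⟨h1, h2, h3⟩, h4⟩
      exact ⟨h1, h2, ih.2 ⟨r, h3, h4⟩⟩

lemma exists_nchain {M : NFA α σ} {S : Set σ} {w : List α} {q : σ}
    (h : q ∈ M.evalFrom S w) :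
    ∃ p ∈ S, ∃ l, NChain M p l q ∧ l.map (fun t => t.2.1) = w := by
  induction w generalizing S with
  | nil => exact ⟨q, h, [], rfl, rfl⟩
  | cons a w ih =>
    obtain ⟨p', hp', l, hc, hm⟩ := ih (S := M.stepSet S a) h
    obtain ⟨p, hp, hstep⟩ := M.mem_stepSet.1 hp'
    exact ⟨p, hp, (p, a, p') :: l, ⟨rfl, hstep, hc⟩, by simp [hm]⟩

lemma nchain_eval {M : NFA α σ} {p q : σ} {l : List (σ × α × σ)}
    (h : NChain M p l q) {S : Set σ} (hp : p ∈ S) :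
    q ∈ M.evalFrom S (l.map (fun t => t.2.1)) := by
  induction l generalizing p S with
  | nil => cases h; exact hp
  | cons t l ih =>
    obtain ⟨h1, h2, h3⟩ := h
    exact ih h3 (M.mem_stepSet.2 ⟨p, hp, h2⟩)

lemma nchain_mem {M : NFA α σ} {p q : σ} {l : List (σ × α × σ)}
    (h : NChain M p l q) : ∀ t ∈ l, t.2.2 ∈ M.step t.1 t.2.1 := by
  induction l generalizing p with
  | nil => intro t ht; simp at ht
  | cons s l ih =>
    obtain ⟨h1, h2, h3⟩ := h
    intro t ht
    rcases List.mem_cons.1 ht with rfl | ht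
    · rw [h1]; exact h2
    · exact ih h3 t ht

lemma nchain_pow {M : NFA α σ} {r : σ} {m : List (σ × α × σ)}
    (h : NChain M r m r) (k : ℕ) : NChain M r (List.replicate k m).flatten r := by
  induction k with
  | zero => exact rfl
  | succ k ih =>
    rw [List.replicate_succ, List.flatten_cons]
    exact nchain_append.2 ⟨r, h, ih⟩

lemma sublist_pair_split {X : Type*} {x : X} {l : List X} (h : List.Sublist [x, x] l) :
    ∃ l₁ l₂ l₃, l = l₁ ++ x :: l₂ ++ x :: l₃ := by
  induction l with
  | nil => cases h
  | cons a l ih =>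
    cases h with
    | cons _ h' =>
      obtain ⟨l₁, l₂, l₃, rfl⟩ := ih h'
      exact ⟨a :: l₁, l₂, l₃, rfl⟩
    | cons_cons _ h' =>
      obtain ⟨s, u, rfl⟩ := List.append_of_mem (h'.subset (List.mem_singleton_self x))
      exact ⟨[], s, u, rfl⟩

lemma infinite_of_dup {M : NFA α σ} {p q : σ} {l : List (σ × α × σ)}
    (hp : p ∈ M.start) (hq : q ∈ M.accept) (h : NChain M p l q) (hd : ¬ l.Nodup) :
    (M.accepts : Set (List α)).Infinite := by
  obtain ⟨t, ht⟩ := List.exists_duplicate_iff_not_nodup.2 hd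
  obtain ⟨l₁, l₂, l₃, rfl⟩ := sublist_pair_split (List.duplicate_iff_sublist.1 ht)
  obtain ⟨r₁, hc₁, hc₂⟩ := nchain_append.1 h
  obtain ⟨h1, h2, hc₃⟩ := hc₂
  subst h1
  obtain ⟨r₂, hc₄, hc₅⟩ := nchain_append.1 hc₁
  obtain ⟨h3, h4, hc₆⟩ := hc₅
  subst h3
  -- hc₄ : NChain M p l₁ t.1, hc₆ : NChain M t.2.2 l₂ t.1, hc₃ : NChain M t.2.2 l₃ q
  have hloop : NChain M t.2.2 (l₂ ++ [t]) t.2.2 :=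
    nchain_append.2 ⟨t.1, hc₆, ⟨rfl, h4, rfl⟩⟩
  set f : σ × α × σ → α := fun t => t.2.1 with hf
  set g : ℕ → List α :=
    fun k => (l₁ ++ t :: ((List.replicate k (l₂ ++ [t])).flatten ++ l₃)).map f with hg
  have hword : ∀ k : ℕ, g k ∈ M.accepts := by
    intro k
    have hchain : NChain M p (l₁ ++ t :: ((List.replicate k (l₂ ++ [t])).flatten ++ l₃)) q :=
      nchain_append.2 ⟨t.1, hc₄, rfl, h4,
        nchain_append.2 ⟨t.2.2, nchain_pow hloop k, hc₃⟩⟩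
    exact ⟨q, hq, nchain_eval hchain hp⟩
  have hlen : ∀ k : ℕ,
      (g k).length = l₁.length + 1 + l₃.length + k * (l₂.length + 1) := by
    intro k
    simp only [hg, List.length_map, List.length_append, List.length_cons,
      List.length_flatten, List.map_replicate, List.sum_replicate, smul_eq_mul, List.length_nil]
    ring
  refine Set.infinite_of_injective_forall_mem (f := g) ?_ hword
  intro k₁ k₂ hkk
  have h' := congrArg List.length hkk
  rw [hlen k₁, hlen k₂] at h'
  have h'' := Nat.add_left_cancel h'
  exact Nat.eq_of_mul_eq_mul_right (Nat.succ_pos _) h''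

end Aux

/-- If an NFA with finite state type (over a finite alphabet) accepts a finite language
and accepts a word of length `n`, then it has at least `n` transitions. -/
theorem nfa_finite_language_transition_lower_bound
    {α : Type*} [Fintype α] {σ : Type*} [Fintype σ] (M : NFA α σ)
    (hfin : Set.Finite (M.accepts : Set (List α)))
    (w : List α) (n : ℕ) (hw : w ∈ M.accepts) (hn : w.length = n) :
    n ≤ Set.ncard {t : σ × α × σ | t.2.2 ∈ M.step t.1 t.2.1} := by
  classical
  obtain ⟨q, hq, hev⟩ := M.mem_accepts.1 hw
  obtain ⟨p, hp, l, hc, hm⟩ := exists_nchain hev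
  have hlen : l.length = n := by
    have := congrArg List.length hm
    simpa [hn] using this
  by_cases hnd : l.Nodup
  · have hsub : (↑l.toFinset : Set (σ × α × σ)) ⊆ {t : σ × α × σ | t.2.2 ∈ M.step t.1 t.2.1} := by
      intro t ht
      exact nchain_mem hc t (List.mem_toFinset.1 (by exact_mod_cast ht))
    calc n = l.toFinset.card := by rw [List.toFinset_card_of_nodup hnd, hlen]
    _ = (↑l.toFinset : Set (σ × α × σ)).ncard := (Set.ncard_coe_finset _).symm
    _ ≤ _ := Set.ncard_le_ncard hsub (Set.toFinite _)
  · exact absurd hfin (infinite_of_dup hp hq hc hnd)
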